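/- arXiv:2405.03297 — 2 statements merged into one kernel-verified Lean document; each statement's English description precedes it below -/
import Mathlib

section
/- Let d_1 ≥ … ≥ d_m be real numbers, let w_1,…,w_m be a basis of ℝ^m, and let 0 = n_0 < n_1 < … < n_S = m be the indices such that d_i = d_{n_s} for n_{s-1} < i ≤ n_s and d_{n_s} > d_{n_s + 1} for s < S. Fix s ∈ {1,…,S} and a positive integer t, and set A_s(t) = Σ_{i=1}^{n_s} e^{t(d_i − d_{n_s})} w_i w_iᵀ. Then for every j with n_{s-1} < j ≤ n_s, the j-th largest eigenvalue of A_s(t) satisfies α_j(A_s(t)) ≤ Σ_{i=j}^{n_s} w_iᵀ w_i. -/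
open Matrix Filter Topology

/-- The `j`-th largest eigenvalue of a symmetric (Hermitian) real matrix, `j` being
zero-based, so `j = 0` gives the largest eigenvalue.  For non-Hermitian matrices the
value is junk (`0`). -/
noncomputable def nthLargestEig {m : ℕ} (A : Matrix (Fin m) (Fin m) ℝ) (j : Fin m) : ℝ :=
  if hA : A.IsHermitian then hA.eigenvalues (Tuple.sort hA.eigenvalues j.rev) else 0

lemma aux_inner {m : ℕ} (u v : EuclideanSpace ℝ (Fin m)) :
    (inner ℝ u v : ℝ) = ∑ k, u k * v k := by
  simp [PiLp.inner_apply, RCLike.inner_apply, conj_trivial, mul_comm]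

lemma aux_CF {m : ℕ} (A : Matrix (Fin m) (Fin m) ℝ) (hA : A.IsHermitian)
    (j : Fin m) (f : Fin m → EuclideanSpace ℝ (Fin m)) :
    ∃ x : EuclideanSpace ℝ (Fin m), x ≠ 0 ∧
      (∀ i : Fin m, (i : ℕ) < (j : ℕ) → (inner ℝ (f i) x : ℝ) = 0) ∧
      nthLargestEig A j * ‖x‖ ^ 2 ≤ (inner ℝ x (Matrix.toEuclideanLin A x) : ℝ) := by
  classical
  set σ := Tuple.sort hA.eigenvalues with hσ
  set b := hA.eigenvectorBasis with hb
  set ub := b.reindex σ.symm with hub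
  have hubk : ∀ k, ub k = b (σ k) := by
    intro k; rw [hub, OrthonormalBasis.reindex_apply, Equiv.symm_symm]
  set K1 : Submodule ℝ (EuclideanSpace ℝ (Fin m)) :=
    Submodule.span ℝ ((Finset.image f (Finset.Iio j) : Finset _) : Set _) with hK1
  set K2 : Submodule ℝ (EuclideanSpace ℝ (Fin m)) :=
    Submodule.span ℝ ((Finset.image (⇑ub) (Finset.Iio j.rev) : Finset _) : Set _) with hK2
  have hd1 : Module.finrank ℝ K1 ≤ (j : ℕ) := by
    refine le_trans (finrank_span_finset_le_card _) ?_
    refine le_trans (Finset.card_image_le) ?_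
    rw [Fin.card_Iio]
  have hd2 : Module.finrank ℝ K2 ≤ (j.rev : ℕ) := by
    refine le_trans (finrank_span_finset_le_card _) ?_
    refine le_trans (Finset.card_image_le) ?_
    rw [Fin.card_Iio]
  have htotal : Module.finrank ℝ (EuclideanSpace ℝ (Fin m)) = m := by
    rw [finrank_euclideanSpace, Fintype.card_fin]
  have h1 : Module.finrank ℝ K1 + Module.finrank ℝ K1ᗮ = m := by
    rw [Submodule.finrank_add_finrank_orthogonal, htotal]
  have h2 : Module.finrank ℝ K2 + Module.finrank ℝ K2ᗮ = m := by
    rw [Submodule.finrank_add_finrank_orthogonal, htotal]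
  have hsum := Submodule.finrank_sup_add_finrank_inf_eq K1ᗮ K2ᗮ
  have hle : Module.finrank ℝ ↥(K1ᗮ ⊔ K2ᗮ) ≤ m := le_trans (Submodule.finrank_le _) (le_of_eq htotal)
  have hrev : (j.rev : ℕ) = m - ((j : ℕ) + 1) := Fin.val_rev j
  have hjm : (j : ℕ) < m := j.isLt
  have hpos : 0 < Module.finrank ℝ ↥(K1ᗮ ⊓ K2ᗮ) := by omega
  have hne : K1ᗮ ⊓ K2ᗮ ≠ ⊥ := by
    intro h
    rw [h, finrank_bot] at hpos
    exact lt_irrefl 0 hpos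
  obtain ⟨x, hxmem, hx0⟩ := Submodule.exists_mem_ne_zero_of_ne_bot hne
  have hx1 : x ∈ K1ᗮ := hxmem.1
  have hx2 : x ∈ K2ᗮ := hxmem.2
  refine ⟨x, hx0, ?_, ?_⟩
  · intro i hi
    refine (Submodule.mem_orthogonal K1 x).1 hx1 (f i) ?_
    refine Submodule.subset_span ?_
    simp only [Finset.coe_image, Set.mem_image, Finset.mem_coe, Finset.mem_Iio]
    exact ⟨i, Fin.lt_def.2 hi, rfl⟩
  · -- Rayleigh bound
    set c : Fin m → ℝ := fun k => (inner ℝ (ub k) x : ℝ) with hc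
    have hc0 : ∀ k : Fin m, (k : ℕ) < (j.rev : ℕ) → c k = 0 := by
      intro k hk
      refine (Submodule.mem_orthogonal K2 x).1 hx2 (ub k) ?_
      refine Submodule.subset_span ?_
      simp only [Finset.coe_image, Set.mem_image, Finset.mem_coe, Finset.mem_Iio]
      exact ⟨k, Fin.lt_def.2 hk, rfl⟩
    have hpars : ∀ y : EuclideanSpace ℝ (Fin m),
        (inner ℝ x y : ℝ) = ∑ k, (inner ℝ (ub k) x : ℝ) * (inner ℝ (ub k) y : ℝ) := by
      intro y
      have h := (ub.repr.inner_map_map x y).symm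
      rw [h, aux_inner]
      refine Finset.sum_congr rfl fun k _ => ?_
      rw [ub.repr_apply_apply, ub.repr_apply_apply]
    have hsym := (Matrix.isHermitian_iff_isSymmetric.1 hA)
    have heig : ∀ k, Matrix.toEuclideanLin A (ub k) = hA.eigenvalues (σ k) • ub k := by
      intro k
      rw [hubk, Matrix.toEuclideanLin_apply, hA.mulVec_eigenvectorBasis (σ k)]
      simp [hb]
    have hray : (inner ℝ x (Matrix.toEuclideanLin A x) : ℝ)
        = ∑ k, hA.eigenvalues (σ k) * (c k) ^ 2 := by
      rw [hpars]
      refine Finset.sum_congr rfl fun k _ => ?_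
      have : (inner ℝ (ub k) (Matrix.toEuclideanLin A x) : ℝ)
          = hA.eigenvalues (σ k) * c k := by
        rw [← hsym (ub k) x, heig k, real_inner_smul_left]
      rw [this]; ring
    have hnorm : ‖x‖ ^ 2 = ∑ k, (c k) ^ 2 := by
      rw [← real_inner_self_eq_norm_sq, hpars]
      refine Finset.sum_congr rfl fun k _ => ?_
      ring
    have hval : nthLargestEig A j = hA.eigenvalues (σ j.rev) := by
      rw [nthLargestEig, dif_pos hA]
    rw [hval, hray, hnorm, Finset.mul_sum]
    refine Finset.sum_le_sum fun k _ => ?_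
    by_cases hk : (k : ℕ) < (j.rev : ℕ)
    · rw [hc0 k hk]; simp
    · have hlek : j.rev ≤ k := not_lt.1 (fun h => hk (Fin.lt_def.1 h))
      have := Tuple.monotone_sort hA.eigenvalues hlek
      exact mul_le_mul_of_nonneg_right this (sq_nonneg _)

/-- With `d`, `w` and the block structure `n`, `Dv` as in the paper
(1-based indices there translated to 0-based `Fin m` indices here), for fixed
`s ∈ {1,…,S}` and a positive integer `t`, set
`A_s(t) = ∑_{i < n s} exp (t (d i - d (n s))) • w i w iᵀ`.  Then for every `j` in the
`s`-th block, the `j`-th largest eigenvalue of `A_s(t)` satisfies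
`α_j (A_s(t)) ≤ ∑_{j ≤ i < n s} wᵢᵀ wᵢ`. -/
theorem stmt10 {m S : ℕ} (hm : 0 < m)
    -- `d 0 ≥ … ≥ d (m-1)`:
    (d : Fin m → ℝ) (hd : Antitone d)
    -- `w` is a basis of `ℝ^m`:
    (w : Fin m → (Fin m → ℝ)) (hw : LinearIndependent ℝ w)
    -- block structure `0 = n 0 < n 1 < … < n S = m` of the level sets of `d`:
    (n : ℕ → ℕ) (hn0 : n 0 = 0) (hnS : n S = m)
    (hmono : ∀ s, s < S → n s < n (s + 1))
    -- `Dv s` is the common value `d (n s)` of `d` on the `s`-th block: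
    (Dv : ℕ → ℝ)
    (hDv : ∀ s, 1 ≤ s → s ≤ S → ∀ i : Fin m, n (s - 1) ≤ (i : ℕ) → (i : ℕ) < n s → d i = Dv s)
    -- `d (n s) > d (n s + 1)`, i.e. the blocks are maximal:
    (hdrop : ∀ s, 1 ≤ s → s < S → Dv (s + 1) < Dv s)
    (s : ℕ) (hs1 : 1 ≤ s) (hsS : s ≤ S) (t : ℕ) (ht : 1 ≤ t)
    (A : Matrix (Fin m) (Fin m) ℝ)
    (hA : A = ∑ i ∈ Finset.univ.filter (fun i : Fin m => (i : ℕ) < n s),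
      Real.exp ((t : ℝ) * (d i - Dv s)) • Matrix.vecMulVec (w i) (w i)) :
    ∀ j : Fin m, n (s - 1) ≤ (j : ℕ) → (j : ℕ) < n s →
      nthLargestEig A j ≤
        ∑ i ∈ Finset.univ.filter (fun i : Fin m => (j : ℕ) ≤ (i : ℕ) ∧ (i : ℕ) < n s),
          ∑ k, w i k ^ 2 := by
  classical
  intro j hj1 hj2
  set e : Fin m → ℝ := fun i => Real.exp ((t : ℝ) * (d i - Dv s)) with he
  set T : Finset (Fin m) := Finset.univ.filter (fun i : Fin m => (i : ℕ) < n s) with hT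
  set T2 : Finset (Fin m) :=
    Finset.univ.filter (fun i : Fin m => (j : ℕ) ≤ (i : ℕ) ∧ (i : ℕ) < n s) with hT2
  have hHerm : A.IsHermitian := by
    have : (∑ i ∈ T, e i • Matrix.vecMulVec (w i) (w i))ᴴ
        = ∑ i ∈ T, e i • Matrix.vecMulVec (w i) (w i) := by
      ext a b
      simp only [Matrix.conjTranspose_apply, Matrix.sum_apply, Matrix.smul_apply,
        Matrix.vecMulVec_apply, smul_eq_mul, star_trivial]
      exact Finset.sum_congr rfl fun i _ => by ring
    rw [hA]
    exact this
  set wE : Fin m → EuclideanSpace ℝ (Fin m) :=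
    fun i => (WithLp.equiv 2 (Fin m → ℝ)).symm (w i) with hwE
  obtain ⟨x, hx0, hxperp, hxlow⟩ := aux_CF A hHerm j wE
  set p : Fin m → ℝ := fun i => (inner ℝ (wE i) x : ℝ) with hpdef
  have hp : ∀ i, p i = ∑ k, w i k * x k := fun i => aux_inner (wE i) x
  have hxA : ∀ a, (Matrix.toEuclideanLin A x) a = ∑ i ∈ T, e i * (w i a * p i) := by
    intro a
    have h0 : (Matrix.toEuclideanLin A x) a = ∑ b, A a b * x b := rfl
    have hAab : ∀ b, A a b = ∑ i ∈ T, e i * (w i a * w i b) := by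
      intro b
      rw [hA]
      simp [he, Matrix.sum_apply, Matrix.smul_apply, Matrix.vecMulVec_apply, smul_eq_mul]
    rw [h0]
    calc ∑ b, A a b * x b = ∑ b, ∑ i ∈ T, e i * (w i a * w i b) * x b := by
          refine Finset.sum_congr rfl fun b _ => ?_
          rw [hAab b, Finset.sum_mul]
      _ = ∑ i ∈ T, ∑ b, e i * (w i a * w i b) * x b := Finset.sum_comm
      _ = ∑ i ∈ T, e i * (w i a * p i) := by
          refine Finset.sum_congr rfl fun i _ => ?_
          simp only [hp, Finset.mul_sum]
          exact Finset.sum_congr rfl fun b _ => by ring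
  have hQ : (inner ℝ x (Matrix.toEuclideanLin A x) : ℝ) = ∑ i ∈ T, e i * p i ^ 2 := by
    rw [aux_inner]
    calc ∑ a, x a * (Matrix.toEuclideanLin A x) a
        = ∑ a, ∑ i ∈ T, x a * (e i * (w i a * p i)) := by
          refine Finset.sum_congr rfl fun a _ => ?_
          rw [hxA a, Finset.mul_sum]
      _ = ∑ i ∈ T, ∑ a, x a * (e i * (w i a * p i)) := Finset.sum_comm
      _ = ∑ i ∈ T, e i * p i ^ 2 := by
          refine Finset.sum_congr rfl fun i _ => ?_
          have h1 : ∑ a, x a * (e i * (w i a * p i)) = (e i * p i) * ∑ a, w i a * x a := by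
            rw [Finset.mul_sum]
            exact Finset.sum_congr rfl fun a _ => by ring
          rw [h1, ← hp i]
          ring
  have hsub : T2 ⊆ T := by
    intro i hi
    simp only [hT2, Finset.mem_filter, Finset.mem_univ, true_and] at hi
    simp only [hT, Finset.mem_filter, Finset.mem_univ, true_and]
    exact hi.2
  have hQ2 : (inner ℝ x (Matrix.toEuclideanLin A x) : ℝ) = ∑ i ∈ T2, p i ^ 2 := by
    rw [hQ]
    rw [← Finset.sum_subset hsub]
    · refine Finset.sum_congr rfl fun i hi => ?_
      simp only [hT2, Finset.mem_filter, Finset.mem_univ, true_and] at hi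
      have hdi : d i = Dv s := hDv s hs1 hsS i (le_trans hj1 hi.1) hi.2
      rw [he]
      simp [hdi]
    · intro i hiT hiT2
      simp only [hT, Finset.mem_filter, Finset.mem_univ, true_and] at hiT
      simp only [hT2, Finset.mem_filter, Finset.mem_univ, true_and] at hiT2
      have : (i : ℕ) < (j : ℕ) := by omega
      have hp0 : p i = 0 := hxperp i this
      rw [hp0]
      ring
  have hCS : ∀ i, p i ^ 2 ≤ (∑ k, w i k ^ 2) * ‖x‖ ^ 2 := by
    intro i
    have h1 := real_inner_mul_inner_self_le (wE i) x
    have h2 : (inner ℝ (wE i) (wE i) : ℝ) = ∑ k, w i k ^ 2 := by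
      rw [aux_inner]
      refine Finset.sum_congr rfl fun k _ => ?_
      have hwk : wE i k = w i k := rfl
      rw [hwk]; ring
    have h3 : (inner ℝ x x : ℝ) = ‖x‖ ^ 2 := real_inner_self_eq_norm_sq x
    calc p i ^ 2 = (inner ℝ (wE i) x : ℝ) * (inner ℝ (wE i) x : ℝ) := by rw [hpdef]; ring
      _ ≤ (inner ℝ (wE i) (wE i) : ℝ) * (inner ℝ x x : ℝ) := h1
      _ = (∑ k, w i k ^ 2) * ‖x‖ ^ 2 := by rw [h2, h3]
  have hnormpos : (0 : ℝ) < ‖x‖ ^ 2 := pow_pos (norm_pos_iff.mpr hx0) 2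
  have hchain : nthLargestEig A j * ‖x‖ ^ 2 ≤ (∑ i ∈ T2, ∑ k, w i k ^ 2) * ‖x‖ ^ 2 := by
    refine le_trans hxlow ?_
    rw [hQ2, Finset.sum_mul]
    exact Finset.sum_le_sum fun i _ => hCS i
  exact (mul_le_mul_iff_of_pos_right hnormpos).1 hchain
end

section
/- Let d_1 ≥ … ≥ d_m be real numbers, let w_1,…,w_m be a basis of ℝ^m, and let 0 = n_0 < n_1 < … < n_S = m be the indices such that d_i = d_{n_s} for n_{s-1} < i ≤ n_s and d_{n_s} > d_{n_s + 1} for s < S. Fix s ∈ {1,…,S} and a positive integer t, and set A_s(t) = Σ_{i=1}^{n_s} e^{t(d_i − d_{n_s})} w_i w_iᵀ, B_s(t) = Σ_{i=n_s+1}^{m} e^{t(d_i − d_{n_s})} w_i w_iᵀ, and C_s = Σ_{i=1}^{n_s} w_i w_iᵀ. Then for every j with n_{s-1} < j ≤ n_s: (i) α_j(C_s) > 0, and (ii) α_j(C_s) + α_m(B_s(t)) ≤ α_j(A_s(t) + B_s(t)) ≤ Σ_{i=j}^{n_s} w_iᵀ w_i + α_1(B_s(t)). -/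
open Matrix Filter Topology

namespace Stmt11Aux
open Finset Submodule Module

variable {m : ℕ}

lemma dot_sum {ι : Type*} (S : Finset ι) (v : Fin m → ℝ) (f : ι → Fin m → ℝ) :
    v ⬝ᵥ (∑ i ∈ S, f i) = ∑ i ∈ S, v ⬝ᵥ f i := by
  simp only [dotProduct, Finset.sum_apply, Finset.mul_sum]
  rw [Finset.sum_comm]

lemma sum_dot {ι : Type*} (S : Finset ι) (v : Fin m → ℝ) (f : ι → Fin m → ℝ) :
    (∑ i ∈ S, f i) ⬝ᵥ v = ∑ i ∈ S, f i ⬝ᵥ v := by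
  simp only [dotProduct, Finset.sum_apply, Finset.sum_mul]
  rw [Finset.sum_comm]

lemma mulVec_sum {ι : Type*} (S : Finset ι) (A : Matrix (Fin m) (Fin m) ℝ)
    (f : ι → Fin m → ℝ) : A *ᵥ (∑ i ∈ S, f i) = ∑ i ∈ S, A *ᵥ f i := by
  simp only [← Matrix.mulVecLin_apply, map_sum]

/-- coordinate family of eigenvectors as plain functions -/
noncomputable def β {A : Matrix (Fin m) (Fin m) ℝ} (hA : A.IsHermitian) (i : Fin m) :
    Fin m → ℝ := hA.eigenvectorBasis i

section Herm
variable {A : Matrix (Fin m) (Fin m) ℝ} (hA : A.IsHermitian)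

lemma beta_dot (i j : Fin m) : β hA i ⬝ᵥ β hA j = if i = j then 1 else 0 := by
  have h := hA.eigenvectorBasis.orthonormal
  rw [orthonormal_iff_ite] at h
  rw [← h i j]
  simp [β, PiLp.inner_apply, RCLike.inner_apply, dotProduct, mul_comm]

lemma expand (x : Fin m → ℝ) : ∑ i, (β hA i ⬝ᵥ x) • β hA i = x := by
  have h := hA.eigenvectorBasis.sum_repr' (WithLp.toLp 2 x : EuclideanSpace ℝ (Fin m))
  have h2 : ∀ i, (inner ℝ (hA.eigenvectorBasis i) (WithLp.toLp 2 x : EuclideanSpace ℝ (Fin m)) : ℝ)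
      = β hA i ⬝ᵥ x := by
    intro i; simp [β, PiLp.inner_apply, RCLike.inner_apply, dotProduct, mul_comm]
  simp only [h2] at h
  have h' := congrArg WithLp.ofLp h
  simpa [β] using h'

lemma dot_self_eq (x : Fin m → ℝ) : x ⬝ᵥ x = ∑ i, (β hA i ⬝ᵥ x) ^ 2 := by
  nth_rewrite 1 [← expand hA x]
  rw [sum_dot]
  refine Finset.sum_congr rfl fun i _ => ?_
  rw [smul_dotProduct, smul_eq_mul, dotProduct_comm, sq]

lemma quad_eq (x : Fin m → ℝ) :
    x ⬝ᵥ (A *ᵥ x) = ∑ i, hA.eigenvalues i * (β hA i ⬝ᵥ x) ^ 2 := by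
  have hx : A *ᵥ x = ∑ i, (β hA i ⬝ᵥ x) • (hA.eigenvalues i • β hA i) := by
    conv_lhs => rw [← expand hA x]
    rw [mulVec_sum]
    refine Finset.sum_congr rfl fun i _ => ?_
    rw [Matrix.mulVec_smul]
    exact congrArg (fun y => (β hA i ⬝ᵥ x) • y) (hA.mulVec_eigenvectorBasis i)
  rw [hx, dot_sum]
  refine Finset.sum_congr rfl fun i _ => ?_
  rw [dotProduct_smul, dotProduct_smul, smul_eq_mul, smul_eq_mul,
    dotProduct_comm]
  ring

lemma beta_li : LinearIndependent ℝ (β hA) := by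
  rw [Fintype.linearIndependent_iff]
  intro g hg i
  have h := congrArg (fun y => β hA i ⬝ᵥ y) hg
  simpa [dot_sum, dotProduct_smul, beta_dot, Finset.sum_ite_eq] using h

lemma nth_eq (j : Fin m) :
    nthLargestEig A j = hA.eigenvalues (Tuple.sort hA.eigenvalues j.rev) := dif_pos hA

lemma span_dot_eq_zero (P : Fin m → Prop) [DecidablePred P] {x : Fin m → ℝ}
    (hx : x ∈ span ℝ (Set.range fun i : {i // P i} => β hA i)) :
    ∀ i, ¬ P i → β hA i ⬝ᵥ x = 0 := by
  intro i hi
  let f : (Fin m → ℝ) →ₗ[ℝ] ℝ :=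
    { toFun := fun y => β hA i ⬝ᵥ y
      map_add' := fun a b => dotProduct_add _ _ _
      map_smul' := fun c a => by simp }
  have hle : span ℝ (Set.range fun k : {k // P k} => β hA k) ≤ LinearMap.ker f := by
    rw [Submodule.span_le]
    rintro _ ⟨k, rfl⟩
    simp only [SetLike.mem_coe, LinearMap.mem_ker]
    show β hA i ⬝ᵥ β hA k = 0
    rw [beta_dot, if_neg]
    exact fun h => hi (h ▸ k.2)
  exact (LinearMap.mem_ker).1 (hle hx)

lemma quad_le_on_span (P : Fin m → Prop) [DecidablePred P] (c : ℝ)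
    (hc : ∀ i, P i → hA.eigenvalues i ≤ c) {x : Fin m → ℝ}
    (hx : x ∈ span ℝ (Set.range fun i : {i // P i} => β hA i)) :
    x ⬝ᵥ (A *ᵥ x) ≤ c * (x ⬝ᵥ x) := by
  rw [quad_eq hA, dot_self_eq hA x, Finset.mul_sum]
  refine Finset.sum_le_sum fun i _ => ?_
  by_cases h : P i
  · exact mul_le_mul_of_nonneg_right (hc i h) (sq_nonneg _)
  · rw [span_dot_eq_zero hA P hx i h]
    simp

lemma quad_ge_on_span (P : Fin m → Prop) [DecidablePred P] (c : ℝ)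
    (hc : ∀ i, P i → c ≤ hA.eigenvalues i) {x : Fin m → ℝ}
    (hx : x ∈ span ℝ (Set.range fun i : {i // P i} => β hA i)) :
    c * (x ⬝ᵥ x) ≤ x ⬝ᵥ (A *ᵥ x) := by
  rw [quad_eq hA, dot_self_eq hA x, Finset.mul_sum]
  refine Finset.sum_le_sum fun i _ => ?_
  by_cases h : P i
  · exact mul_le_mul_of_nonneg_right (hc i h) (sq_nonneg _)
  · rw [span_dot_eq_zero hA P hx i h]
    simp

lemma finrank_span_beta (P : Fin m → Prop) [DecidablePred P] :
    finrank ℝ (span ℝ (Set.range fun i : {i // P i} => β hA i))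
      = Fintype.card {i // P i} := by
  apply finrank_span_eq_card
  exact (beta_li hA).comp Subtype.val Subtype.val_injective

end Herm

def equivLe (r : ℕ) (hr : r < m) : {k : Fin m // (k : ℕ) ≤ r} ≃ Fin (r + 1) where
  toFun k := ⟨k.1.1, by have := k.2; omega⟩
  invFun i := ⟨⟨i.1, by have := i.2; omega⟩, Nat.lt_succ_iff.mp i.2⟩
  left_inv k := rfl
  right_inv i := rfl

lemma card_le_subtype (r : ℕ) (hr : r < m) :
    Fintype.card {k : Fin m // (k : ℕ) ≤ r} = r + 1 := by
  rw [Fintype.card_congr (equivLe r hr), Fintype.card_fin]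

def equivGe (r : ℕ) : {k : Fin m // r ≤ (k : ℕ)} ≃ Fin (m - r) where
  toFun k := ⟨k.1.1 - r, by have := k.1.2; have := k.2; omega⟩
  invFun i := ⟨⟨i.1 + r, by have := i.2; omega⟩, Nat.le_add_left r i.1⟩
  left_inv k := by
    have := k.2
    apply Subtype.ext; apply Fin.ext; simp; omega
  right_inv i := by
    apply Fin.ext; simp

lemma card_ge_subtype (r : ℕ) :
    Fintype.card {k : Fin m // r ≤ (k : ℕ)} = m - r := by
  rw [Fintype.card_congr (equivGe r), Fintype.card_fin]

lemma exists_ne_zero_mem_inf (V W : Submodule ℝ (Fin m → ℝ))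
    (h : m < finrank ℝ V + finrank ℝ W) : ∃ x, x ∈ V ∧ x ∈ W ∧ x ≠ 0 := by
  have h1 := Submodule.finrank_sup_add_finrank_inf_eq V W
  have h2 : finrank ℝ ↥(V ⊔ W) ≤ m := by
    have h3 := Submodule.finrank_le (V ⊔ W)
    simpa using h3
  have h4 : 0 < finrank ℝ ↥(V ⊓ W) := by omega
  have hne : V ⊓ W ≠ ⊥ := by
    intro hbot
    rw [hbot] at h4
    simp at h4
  obtain ⟨x, hx, h0⟩ := Submodule.exists_mem_ne_zero_of_ne_bot hne
  exact ⟨x, hx.1, hx.2, h0⟩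

section CF
variable {A : Matrix (Fin m) (Fin m) ℝ} (hA : A.IsHermitian)

lemma dot_self_pos {x : Fin m → ℝ} (hx : x ≠ 0) : 0 < x ⬝ᵥ x := by
  have h0 : 0 ≤ x ⬝ᵥ x := Finset.sum_nonneg fun i _ => mul_self_nonneg _
  rcases lt_or_eq_of_le h0 with h | h
  · exact h
  · exact absurd (dotProduct_self_eq_zero.mp h.symm) hx

include hA

lemma le_nthLargestEig (j : Fin m) (V : Submodule ℝ (Fin m → ℝ))
    (hV : (j : ℕ) < finrank ℝ V) (c : ℝ)
    (h : ∀ x ∈ V, c * (x ⬝ᵥ x) ≤ x ⬝ᵥ (A *ᵥ x)) : c ≤ nthLargestEig A j := by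
  classical
  set σ := Tuple.sort hA.eigenvalues with hσ
  set P : Fin m → Prop := fun i => ((σ.symm i : Fin m) : ℕ) ≤ (j.rev : ℕ) with hP
  have hcard : Fintype.card {i // P i} = m - (j : ℕ) := by
    have e : {k : Fin m // (k : ℕ) ≤ (j.rev : ℕ)} ≃ {i // P i} :=
      Equiv.subtypeEquiv σ (fun k => by simp [hP])
    rw [← Fintype.card_congr e, card_le_subtype _ j.rev.isLt, Fin.val_rev]
    have := j.isLt
    omega
  have hfr : finrank ℝ (span ℝ (Set.range fun i : {i // P i} => β hA i)) = m - (j : ℕ) :=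
    (finrank_span_beta hA P).trans hcard
  obtain ⟨x, hxV, hxW, hx0⟩ := exists_ne_zero_mem_inf V _ (by
    rw [hfr]; have := j.isLt; omega)
  have hub : x ⬝ᵥ (A *ᵥ x) ≤ hA.eigenvalues (σ j.rev) * (x ⬝ᵥ x) := by
    refine quad_le_on_span hA P _ (fun i hi => ?_) hxW
    have hmon : hA.eigenvalues (σ (σ.symm i)) ≤ hA.eigenvalues (σ j.rev) :=
      Tuple.monotone_sort hA.eigenvalues (Fin.le_def.mpr hi)
    simpa using hmon
  have hq := le_trans (h x hxV) hub
  have := le_of_mul_le_mul_right hq (dot_self_pos hx0)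
  rw [nth_eq hA]
  exact this

lemma nthLargestEig_le (j : Fin m) (V : Submodule ℝ (Fin m → ℝ))
    (hV : m < finrank ℝ V + (j : ℕ) + 1) (c : ℝ)
    (h : ∀ x ∈ V, x ⬝ᵥ (A *ᵥ x) ≤ c * (x ⬝ᵥ x)) : nthLargestEig A j ≤ c := by
  classical
  set σ := Tuple.sort hA.eigenvalues with hσ
  set P : Fin m → Prop := fun i => (j.rev : ℕ) ≤ ((σ.symm i : Fin m) : ℕ) with hP
  have hcard : Fintype.card {i // P i} = (j : ℕ) + 1 := by
    have e : {k : Fin m // (j.rev : ℕ) ≤ (k : ℕ)} ≃ {i // P i} :=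
      Equiv.subtypeEquiv σ (fun k => by simp [hP])
    rw [← Fintype.card_congr e, card_ge_subtype, Fin.val_rev]
    have := j.isLt
    omega
  have hfr : finrank ℝ (span ℝ (Set.range fun i : {i // P i} => β hA i)) = (j : ℕ) + 1 :=
    (finrank_span_beta hA P).trans hcard
  obtain ⟨x, hxV, hxW, hx0⟩ := exists_ne_zero_mem_inf V _ (by rw [hfr]; omega)
  have hub : hA.eigenvalues (σ j.rev) * (x ⬝ᵥ x) ≤ x ⬝ᵥ (A *ᵥ x) := by
    refine quad_ge_on_span hA P _ (fun i hi => ?_) hxW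
    have hmon : hA.eigenvalues (σ j.rev) ≤ hA.eigenvalues (σ (σ.symm i)) :=
      Tuple.monotone_sort hA.eigenvalues (Fin.le_def.mpr hi)
    simpa using hmon
  have hq := le_trans hub (h x hxV)
  have := le_of_mul_le_mul_right hq (dot_self_pos hx0)
  rw [nth_eq hA]
  exact this

lemma quad_le_max (hm : 0 < m) (x : Fin m → ℝ) :
    x ⬝ᵥ (A *ᵥ x) ≤ nthLargestEig A ⟨0, hm⟩ * (x ⬝ᵥ x) := by
  rw [nth_eq hA, quad_eq hA, dot_self_eq hA x, Finset.mul_sum]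
  refine Finset.sum_le_sum fun i _ => ?_
  refine mul_le_mul_of_nonneg_right ?_ (sq_nonneg _)
  set σ := Tuple.sort hA.eigenvalues
  have : hA.eigenvalues (σ (σ.symm i)) ≤ hA.eigenvalues (σ (Fin.rev ⟨0, hm⟩)) := by
    refine Tuple.monotone_sort hA.eigenvalues (Fin.le_def.mpr ?_)
    rw [Fin.val_rev]
    simp only [Fin.val_mk]
    have := (σ.symm i).isLt
    omega
  simpa using this

lemma quad_ge_min (hm : 0 < m) (x : Fin m → ℝ) :
    nthLargestEig A ⟨m - 1, by omega⟩ * (x ⬝ᵥ x) ≤ x ⬝ᵥ (A *ᵥ x) := by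
  rw [nth_eq hA, quad_eq hA, dot_self_eq hA x, Finset.mul_sum]
  refine Finset.sum_le_sum fun i _ => ?_
  refine mul_le_mul_of_nonneg_right ?_ (sq_nonneg _)
  set σ := Tuple.sort hA.eigenvalues
  have : hA.eigenvalues (σ (Fin.rev ⟨m - 1, by omega⟩)) ≤ hA.eigenvalues (σ (σ.symm i)) := by
    refine Tuple.monotone_sort hA.eigenvalues (Fin.le_def.mpr ?_)
    rw [Fin.val_rev]
    simp only [Fin.val_mk]
    omega
  simpa using this

end CF

def equivLt (c : ℕ) (hc : c ≤ m) : {k : Fin m // (k : ℕ) < c} ≃ Fin c where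
  toFun k := ⟨k.1.1, k.2⟩
  invFun i := ⟨⟨i.1, lt_of_lt_of_le i.2 hc⟩, i.2⟩
  left_inv k := rfl
  right_inv i := rfl

lemma card_lt_subtype (c : ℕ) (hc : c ≤ m) :
    Fintype.card {k : Fin m // (k : ℕ) < c} = c := by
  rw [Fintype.card_congr (equivLt c hc), Fintype.card_fin]

lemma card_sort_le (σ : Equiv.Perm (Fin m)) (r : Fin m) :
    Fintype.card {i : Fin m // ((σ.symm i : Fin m) : ℕ) ≤ (r : ℕ)} = (r : ℕ) + 1 := by
  have e : {k : Fin m // (k : ℕ) ≤ (r : ℕ)} ≃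
      {i : Fin m // ((σ.symm i : Fin m) : ℕ) ≤ (r : ℕ)} :=
    Equiv.subtypeEquiv σ (fun k => by simp)
  rw [← Fintype.card_congr e, card_le_subtype _ r.isLt]

lemma card_sort_ge (σ : Equiv.Perm (Fin m)) (r : Fin m) :
    Fintype.card {i : Fin m // (r : ℕ) ≤ ((σ.symm i : Fin m) : ℕ)} = m - (r : ℕ) := by
  have e : {k : Fin m // (r : ℕ) ≤ (k : ℕ)} ≃
      {i : Fin m // (r : ℕ) ≤ ((σ.symm i : Fin m) : ℕ)} :=
    Equiv.subtypeEquiv σ (fun k => by simp)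
  rw [← Fintype.card_congr e, card_ge_subtype]

section EigQuad
variable {A : Matrix (Fin m) (Fin m) ℝ} (hA : A.IsHermitian)

lemma eigenvalue_eq_quad (i : Fin m) :
    hA.eigenvalues i = β hA i ⬝ᵥ (A *ᵥ β hA i) := by
  rw [quad_eq hA]
  rw [Finset.sum_eq_single i]
  · rw [beta_dot, if_pos rfl]
    norm_num
  · intro l _ hl
    rw [beta_dot, if_neg hl]
    norm_num
  · intro h
    exact absurd (Finset.mem_univ i) h

end EigQuad

lemma exists_perp_space (w : Fin m → (Fin m → ℝ)) (hw : LinearIndependent ℝ w)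
    (c : ℕ) (hc : c ≤ m) :
    ∃ V : Submodule ℝ (Fin m → ℝ), finrank ℝ V = m - c ∧
      ∀ x, x ∈ V ↔ ∀ i : Fin m, (i : ℕ) < c → w i ⬝ᵥ x = 0 := by
  classical
  set Φ : (Fin m → ℝ) →ₗ[ℝ] (Fin m → ℝ) := (Matrix.of w).mulVecLin with hΦ
  have hΦapp : ∀ (x : Fin m → ℝ) (i : Fin m), Φ x i = w i ⬝ᵥ x := fun x i => rfl
  have hinj : Function.Injective Φ := by
    rw [← LinearMap.ker_eq_bot, Submodule.eq_bot_iff]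
    intro x hx
    by_cases hm0 : m = 0
    · subst hm0
      funext i
      exact i.elim0
    haveI : Nonempty (Fin m) := ⟨⟨0, Nat.pos_of_ne_zero hm0⟩⟩
    have hspan : Submodule.span ℝ (Set.range w) = ⊤ :=
      hw.span_eq_top_of_card_eq_finrank (by simp)
    have hx' : ∀ i, w i ⬝ᵥ x = 0 := by
      intro i
      have h1 := LinearMap.mem_ker.mp hx
      have h2 := congrFun h1 i
      rwa [hΦapp] at h2
    have hxtop : x ∈ Submodule.span ℝ (Set.range w) := by
      rw [hspan]; trivial
    obtain ⟨g, hg⟩ := (mem_span_range_iff_exists_fun ℝ).mp hxtop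
    have hdot : x ⬝ᵥ x = 0 := by
      nth_rewrite 1 [← hg]
      rw [sum_dot]
      refine Finset.sum_eq_zero fun i _ => ?_
      rw [smul_dotProduct, hx' i, smul_zero]
    exact dotProduct_self_eq_zero.mp hdot
  have hbij : Function.Bijective Φ :=
    ⟨hinj, (LinearMap.injective_iff_surjective).mp hinj⟩
  set e := LinearEquiv.ofBijective Φ hbij with he
  set π : (Fin m → ℝ) →ₗ[ℝ] ({i : Fin m // (i : ℕ) < c} → ℝ) :=
    LinearMap.funLeft ℝ ℝ Subtype.val with hπ
  have hπsurj : Function.Surjective π :=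
    LinearMap.funLeft_surjective_of_injective ℝ ℝ _ Subtype.val_injective
  have hkerfr : finrank ℝ (LinearMap.ker π) = m - c := by
    have h1 := LinearMap.finrank_range_add_finrank_ker π
    rw [LinearMap.range_eq_top.mpr hπsurj, finrank_top] at h1
    have h2 : Fintype.card {i : Fin m // (i : ℕ) < c} = c := card_lt_subtype c hc
    simp only [Module.finrank_pi, h2, Fintype.card_fin] at h1
    omega
  refine ⟨Submodule.comap (e : (Fin m → ℝ) →ₗ[ℝ] (Fin m → ℝ)) (LinearMap.ker π), ?_, ?_⟩
  · rw [Submodule.comap_equiv_eq_map_symm, LinearEquiv.finrank_map_eq]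
    exact hkerfr
  · intro x
    rw [Submodule.mem_comap]
    constructor
    · intro hx i hi
      exact congrFun (LinearMap.mem_ker.mp hx) ⟨i, hi⟩
    · intro hx
      rw [LinearMap.mem_ker]
      funext i
      rw [hπ, LinearMap.funLeft_apply]
      show Φ x i.1 = 0
      rw [hΦapp]
      exact hx i.1 i.2

lemma vecMulVec_mulVec (u v x : Fin m → ℝ) :
    Matrix.vecMulVec u v *ᵥ x = (v ⬝ᵥ x) • u := by
  funext i
  show (∑ l, Matrix.vecMulVec u v i l * x l) = (∑ l, v l * x l) * u i
  rw [Finset.sum_mul]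
  refine Finset.sum_congr rfl fun l _ => ?_
  rw [Matrix.vecMulVec_apply]
  ring

lemma sum_mulVec {ι : Type*} (S : Finset ι) (f : ι → Matrix (Fin m) (Fin m) ℝ)
    (x : Fin m → ℝ) : (∑ i ∈ S, f i) *ᵥ x = ∑ i ∈ S, f i *ᵥ x := by
  funext k
  simp only [Matrix.mulVec, dotProduct, Finset.sum_apply, Matrix.sum_apply, Finset.sum_mul]
  rw [Finset.sum_comm]

lemma sum_quad (w : Fin m → (Fin m → ℝ)) (S : Finset (Fin m)) (coef : Fin m → ℝ)
    (x : Fin m → ℝ) :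
    x ⬝ᵥ ((∑ i ∈ S, coef i • Matrix.vecMulVec (w i) (w i)) *ᵥ x)
      = ∑ i ∈ S, coef i * (w i ⬝ᵥ x) ^ 2 := by
  rw [sum_mulVec, dot_sum]
  refine Finset.sum_congr rfl fun i _ => ?_
  rw [Matrix.smul_mulVec, vecMulVec_mulVec, dotProduct_smul,
    dotProduct_smul, smul_eq_mul, smul_eq_mul, dotProduct_comm]
  ring

lemma sum_herm (w : Fin m → (Fin m → ℝ)) (S : Finset (Fin m)) (coef : Fin m → ℝ) :
    (∑ i ∈ S, coef i • Matrix.vecMulVec (w i) (w i)).IsHermitian := by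
  show _ = _
  ext k l
  simp only [Matrix.conjTranspose_apply, Matrix.sum_apply, Matrix.smul_apply,
    Matrix.vecMulVec_apply, smul_eq_mul, star_sum, star_mul', star_trivial]
  refine Finset.sum_congr rfl fun i _ => ?_
  ring

end Stmt11Aux

open Finset Submodule Module Stmt11Aux in
/-- With `d`, `w` and the block structure `n`, `Dv` as in the paper
(1-based indices translated to 0-based `Fin m` indices), for fixed `s ∈ {1,…,S}` and a
positive integer `t`, set `A_s(t) = ∑_{i < n s} exp (t (d i - d (n s))) • w i w iᵀ`,
`B_s(t) = ∑_{n s ≤ i} exp (t (d i - d (n s))) • w i w iᵀ` and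
`C_s = ∑_{i < n s} w i w iᵀ`.  Then for every `j` in the `s`-th block:
(i) `α_j (C_s) > 0`, and
(ii) `α_j (C_s) + α_m (B_s(t)) ≤ α_j (A_s(t) + B_s(t)) ≤ ∑_{j ≤ i < n s} wᵢᵀ wᵢ + α_1 (B_s(t))`. -/
theorem stmt11 {m S : ℕ} (hm : 0 < m)
    -- `d 0 ≥ … ≥ d (m-1)`:
    (d : Fin m → ℝ) (hd : Antitone d)
    -- `w` is a basis of `ℝ^m`:
    (w : Fin m → (Fin m → ℝ)) (hw : LinearIndependent ℝ w)
    -- block structure `0 = n 0 < n 1 < … < n S = m` of the level sets of `d`: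
    (n : ℕ → ℕ) (hn0 : n 0 = 0) (hnS : n S = m)
    (hmono : ∀ s, s < S → n s < n (s + 1))
    -- `Dv s` is the common value `d (n s)` of `d` on the `s`-th block:
    (Dv : ℕ → ℝ)
    (hDv : ∀ s, 1 ≤ s → s ≤ S → ∀ i : Fin m, n (s - 1) ≤ (i : ℕ) → (i : ℕ) < n s → d i = Dv s)
    -- `d (n s) > d (n s + 1)`, i.e. the blocks are maximal:
    (hdrop : ∀ s, 1 ≤ s → s < S → Dv (s + 1) < Dv s)
    (s : ℕ) (hs1 : 1 ≤ s) (hsS : s ≤ S) (t : ℕ) (ht : 1 ≤ t)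
    (A B C : Matrix (Fin m) (Fin m) ℝ)
    (hA : A = ∑ i ∈ Finset.univ.filter (fun i : Fin m => (i : ℕ) < n s),
      Real.exp ((t : ℝ) * (d i - Dv s)) • Matrix.vecMulVec (w i) (w i))
    (hB : B = ∑ i ∈ Finset.univ.filter (fun i : Fin m => n s ≤ (i : ℕ)),
      Real.exp ((t : ℝ) * (d i - Dv s)) • Matrix.vecMulVec (w i) (w i))
    (hC : C = ∑ i ∈ Finset.univ.filter (fun i : Fin m => (i : ℕ) < n s),
      Matrix.vecMulVec (w i) (w i)) :
    ∀ j : Fin m, n (s - 1) ≤ (j : ℕ) → (j : ℕ) < n s →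
      0 < nthLargestEig C j ∧
      nthLargestEig C j + nthLargestEig B ⟨m - 1, by omega⟩ ≤ nthLargestEig (A + B) j ∧
      nthLargestEig (A + B) j ≤
        (∑ i ∈ Finset.univ.filter (fun i : Fin m => (j : ℕ) ≤ (i : ℕ) ∧ (i : ℕ) < n s),
          ∑ k, w i k ^ 2) + nthLargestEig B ⟨0, hm⟩ := by
  classical
  have hnle : ∀ a b : ℕ, a ≤ b → b ≤ S → n a ≤ n b := by
    intro a b hab hbS
    induction b with
    | zero =>
      have ha : a = 0 := Nat.le_zero.mp hab
      subst ha; exact le_rfl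
    | succ k ih =>
      rcases Nat.lt_succ_iff_lt_or_eq.mp (Nat.lt_succ_of_le hab) with hlt | heq
      · exact le_trans (ih (by omega) (by omega)) (le_of_lt (hmono k (by omega)))
      · subst heq; exact le_rfl
  intro j hj1 hj2
  have hjm : (j : ℕ) < m := j.isLt
  have hns_le : n s ≤ m := by
    have h := hnle s S hsS le_rfl
    rwa [hnS] at h
  have hblock : n (s - 1) < n s := by
    have h := hmono (s - 1) (by omega)
    rwa [Nat.sub_add_cancel hs1] at h
  have hlastlt : n s - 1 < m := by omega
  have hlast : d ⟨n s - 1, hlastlt⟩ = Dv s :=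
    hDv s hs1 hsS ⟨n s - 1, hlastlt⟩ (show n (s - 1) ≤ n s - 1 by omega)
      (show n s - 1 < n s by omega)
  have hdge : ∀ i : Fin m, (i : ℕ) < n s → Dv s ≤ d i := by
    intro i hi
    rw [← hlast]
    refine hd ?_
    rw [Fin.le_def]
    show (i : ℕ) ≤ n s - 1
    omega
  have hcoef1 : ∀ i : Fin m, (i : ℕ) < n s →
      (1 : ℝ) ≤ Real.exp ((t : ℝ) * (d i - Dv s)) := by
    intro i hi
    apply Real.one_le_exp
    have h1 := hdge i hi
    have h2 : (0 : ℝ) ≤ (t : ℝ) := Nat.cast_nonneg t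
    nlinarith
  have hcoefeq : ∀ i : Fin m, (j : ℕ) ≤ (i : ℕ) → (i : ℕ) < n s →
      Real.exp ((t : ℝ) * (d i - Dv s)) = 1 := by
    intro i h1 h2
    rw [hDv s hs1 hsS i (le_trans hj1 h1) h2]
    simp
  have hHA : A.IsHermitian := by rw [hA]; exact sum_herm w _ _
  have hHB : B.IsHermitian := by rw [hB]; exact sum_herm w _ _
  have hCsmul : C = ∑ i ∈ Finset.univ.filter (fun i : Fin m => (i : ℕ) < n s),
      (1 : ℝ) • Matrix.vecMulVec (w i) (w i) := by
    rw [hC]; simp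
  have hHC : C.IsHermitian := by rw [hCsmul]; exact sum_herm w _ _
  have hHAB : (A + B).IsHermitian := hHA.add hHB
  have hqA : ∀ x : Fin m → ℝ, x ⬝ᵥ (A *ᵥ x)
      = ∑ i ∈ Finset.univ.filter (fun i : Fin m => (i : ℕ) < n s),
        Real.exp ((t : ℝ) * (d i - Dv s)) * (w i ⬝ᵥ x) ^ 2 := by
    intro x; rw [hA]; exact sum_quad w _ _ x
  have hqC : ∀ x : Fin m → ℝ, x ⬝ᵥ (C *ᵥ x)
      = ∑ i ∈ Finset.univ.filter (fun i : Fin m => (i : ℕ) < n s), (w i ⬝ᵥ x) ^ 2 := by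
    intro x
    rw [hCsmul, sum_quad w _ _ x]
    simp
  have hqAB : ∀ x : Fin m → ℝ, x ⬝ᵥ ((A + B) *ᵥ x)
      = x ⬝ᵥ (A *ᵥ x) + x ⬝ᵥ (B *ᵥ x) := by
    intro x; rw [Matrix.add_mulVec, dotProduct_add]
  have hqCnn : ∀ x : Fin m → ℝ, 0 ≤ x ⬝ᵥ (C *ᵥ x) := fun x => by
    rw [hqC]; exact Finset.sum_nonneg fun i _ => sq_nonneg _
  have hqCA : ∀ x : Fin m → ℝ, x ⬝ᵥ (C *ᵥ x) ≤ x ⬝ᵥ (A *ᵥ x) := by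
    intro x
    rw [hqA x, hqC x]
    refine Finset.sum_le_sum fun i hi => ?_
    have hi' : (i : ℕ) < n s := by simpa using hi
    exact le_mul_of_one_le_left (sq_nonneg _) (hcoef1 i hi')
  obtain ⟨Vns, hVnsfr, hVnsmem⟩ := exists_perp_space w hw (n s) hns_le
  obtain ⟨Vj, hVjfr, hVjmem⟩ := exists_perp_space w hw (j : ℕ) (le_of_lt hjm)
  refine ⟨?_, ?_, ?_⟩
  · -- part 1
    have hge : (0 : ℝ) ≤ nthLargestEig C j := by
      refine le_nthLargestEig hHC j ⊤ ?_ 0 (fun x _ => by rw [zero_mul]; exact hqCnn x)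
      rw [finrank_top]
      simpa using hjm
    rcases lt_or_eq_of_le hge with hlt | heq
    · exact hlt
    exfalso
    set σC := Tuple.sort hHC.eigenvalues with hσC
    have hαj : hHC.eigenvalues (σC j.rev) = 0 := by
      rw [← nth_eq hHC j, ← heq]
    set P : Fin m → Prop := fun i => ((σC.symm i : Fin m) : ℕ) ≤ (j.rev : ℕ) with hP
    have heig0 : ∀ i, P i → hHC.eigenvalues i = 0 := by
      intro i hi
      have hle : hHC.eigenvalues i ≤ 0 := by
        have hmon := Tuple.monotone_sort hHC.eigenvalues (Fin.le_def.mpr hi)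
        simp only [Function.comp_apply, ← hσC, Equiv.apply_symm_apply] at hmon
        rwa [hαj] at hmon
      have hge0 : 0 ≤ hHC.eigenvalues i := by
        rw [eigenvalue_eq_quad hHC i]
        exact hqCnn _
      exact le_antisymm hle hge0
    have hmem : ∀ i : {i // P i}, β hHC i.1 ∈ Vns := by
      intro i
      rw [hVnsmem]
      intro l hl
      have hCv : C *ᵥ β hHC i.1 = 0 := by
        have hv := hHC.mulVec_eigenvectorBasis i.1
        rw [heig0 i.1 i.2, zero_smul] at hv
        exact hv
      have hq0 : (β hHC i.1) ⬝ᵥ (C *ᵥ β hHC i.1) = 0 := by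
        rw [hCv, dotProduct_zero]
      rw [hqC] at hq0
      have hz := (Finset.sum_eq_zero_iff_of_nonneg (fun _ _ => sq_nonneg _)).mp hq0 l
        (Finset.mem_filter.mpr ⟨Finset.mem_univ l, hl⟩)
      exact pow_eq_zero_iff (two_ne_zero) |>.mp hz
  -- continue part 1
    have hWle : span ℝ (Set.range fun i : {i // P i} => β hHC i.1) ≤ Vns := by
      rw [Submodule.span_le]
      rintro _ ⟨i, rfl⟩
      exact hmem i
    have hfrW : finrank ℝ (span ℝ (Set.range fun i : {i // P i} => β hHC i.1))
        = m - (j : ℕ) := by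
      have hcard : Fintype.card {i // P i} = (j.rev : ℕ) + 1 := card_sort_le σC j.rev
      rw [finrank_span_beta hHC P, hcard, Fin.val_rev]
      omega
    have hle2 : m - (j : ℕ) ≤ m - n s := by
      rw [← hfrW, ← hVnsfr]
      exact Submodule.finrank_mono hWle
    omega
  · -- part 2
    set σC := Tuple.sort hHC.eigenvalues with hσC
    set P : Fin m → Prop := fun i => (j.rev : ℕ) ≤ ((σC.symm i : Fin m) : ℕ) with hP
    refine le_nthLargestEig hHAB j
      (span ℝ (Set.range fun i : {i // P i} => β hHC i.1)) ?_ _ ?_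
    · have hcard : Fintype.card {i // P i} = m - (j.rev : ℕ) := card_sort_ge σC j.rev
      rw [finrank_span_beta hHC P, hcard, Fin.val_rev]
      omega
    · intro x hx
      have h1 : nthLargestEig C j * (x ⬝ᵥ x) ≤ x ⬝ᵥ (C *ᵥ x) := by
        rw [nth_eq hHC]
        refine quad_ge_on_span hHC P _ (fun i hi => ?_) hx
        have hmon := Tuple.monotone_sort hHC.eigenvalues (Fin.le_def.mpr hi)
        simpa [← hσC] using hmon
      have h3 := quad_ge_min hHB hm x
      have h2 := hqCA x
      rw [hqAB, add_mul]
      linarith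
  · -- part 3
    refine nthLargestEig_le hHAB j Vj ?_ _ ?_
    · rw [hVjfr]; omega
    · intro x hx
      have hxperp : ∀ i : Fin m, (i : ℕ) < (j : ℕ) → w i ⬝ᵥ x = 0 := (hVjmem x).mp hx
      have hBb := quad_le_max hHB hm x
      have hAb : x ⬝ᵥ (A *ᵥ x)
          ≤ (∑ i ∈ Finset.univ.filter
                (fun i : Fin m => (j : ℕ) ≤ (i : ℕ) ∧ (i : ℕ) < n s),
              ∑ k, w i k ^ 2) * (x ⬝ᵥ x) := by
        rw [hqA]
        have hsub : Finset.univ.filter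
              (fun i : Fin m => (j : ℕ) ≤ (i : ℕ) ∧ (i : ℕ) < n s)
            ⊆ Finset.univ.filter (fun i : Fin m => (i : ℕ) < n s) := by
          intro i hi
          simp only [Finset.mem_filter, Finset.mem_univ, true_and] at *
          exact hi.2
        have hz : ∀ i ∈ Finset.univ.filter (fun i : Fin m => (i : ℕ) < n s),
            i ∉ Finset.univ.filter
              (fun i : Fin m => (j : ℕ) ≤ (i : ℕ) ∧ (i : ℕ) < n s) →
            Real.exp ((t : ℝ) * (d i - Dv s)) * (w i ⬝ᵥ x) ^ 2 = 0 := by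
          intro i hi hni
          simp only [Finset.mem_filter, Finset.mem_univ, true_and] at hi hni
          have hij : (i : ℕ) < (j : ℕ) := by
            rcases Nat.lt_or_ge (i : ℕ) (j : ℕ) with h | h
            · exact h
            · exact absurd ⟨h, hi⟩ hni
          rw [hxperp i hij]
          simp
        rw [← Finset.sum_subset hsub hz, Finset.sum_mul]
        refine Finset.sum_le_sum fun i hi => ?_
        simp only [Finset.mem_filter, Finset.mem_univ, true_and] at hi
        rw [hcoefeq i hi.1 hi.2, one_mul]
        have hcs := Finset.sum_mul_sq_le_sq_mul_sq Finset.univ (w i) x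
        have hxx : x ⬝ᵥ x = ∑ k, x k ^ 2 := by
          simp [dotProduct, sq]
        rw [hxx]
        simpa [dotProduct] using hcs
      rw [hqAB, add_mul]
      linarith
end
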